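/- Suppose (i) for every action a and aspects α, β, if d(α,β) and a has aspect β, then for all situations s, t, R_α(s,t) ↔ R_α(a(s),t); and (ii) for every fluent p and aspect α, if p has aspect α then there exists a predicate q on situations such that for all s, p(s) ↔ ∃t (q(t) ∧ R_α(s,t)). Then the non-interference axiom holds: for every fluent p, action a, and aspects α, β, if p has aspect α, a has aspect β, and d(α,β), then the frame axiom F[a,p] holds, i.e., for all s, p(s) ↔ p(a(s)). -/
import Mathlib

/-- Relational formalism (existential version): the non-interference axiom
follows from the two relational axioms. -/
theorem relational_existential_noninterference
    {S A : Type*} (R : A → S → S → Prop) (d : A → A → Prop)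
    (fluentAspect : (S → Prop) → A → Prop) (actionAspect : (S → S) → A → Prop)
    (h1 : ∀ (a : S → S) (α β : A), d α β → actionAspect a β →
      ∀ s t : S, R α s t ↔ R α (a s) t)
    (h2 : ∀ (p : S → Prop) (α : A), fluentAspect p α →
      ∃ q : S → Prop, ∀ s : S, p s ↔ ∃ t : S, q t ∧ R α s t) :
    ∀ (p : S → Prop) (a : S → S) (α β : A),
      fluentAspect p α → actionAspect a β → d α β →
      ∀ s : S, p s ↔ p (a s) := by
  intro p a α β hp ha hd s
  obtain ⟨q, hq⟩ := h2 p α hp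
  rw [hq, hq]
  constructor <;> rintro ⟨t, hqt, hR⟩
  · exact ⟨t, hqt, (h1 a α β hd ha s t).mp hR⟩
  · exact ⟨t, hqt, (h1 a α β hd ha s t).mpr hR⟩
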